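/- Additivity of KL divergence over subintervals for measures sharing bridge structure: let T = {t_0 < ... < t_k} and suppose P and Q are path measures on [0,T] such that P factorizes as P_T ∏_{i=1}^k P_{|t_{i-1},t_i} and Q as Q_T ∏_{i=1}^k Q_{|t_{i-1},t_i} (both reciprocal with respect to T). Then D_KL(P | Q) = D_KL(P_T | Q_T) + Σ_{i=1}^k ∫ D_KL(P_{|t_{i-1},t_i}(·|a,b) | Q_{|t_{i-1},t_i}(·|a,b)) dP_{t_{i-1},t_i}(a,b). -/

import Mathlib

open MeasureTheory ProbabilityTheory
open scoped ENNReal NNReal Classical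

/-- Kullback–Leibler divergence `D_KL(μ | ν) = ∫ log(dμ/dν) dμ` when `μ ≪ ν` (and the
integrand is integrable), and `+∞` otherwise. -/

noncomputable def klDiv {α : Type*} [MeasurableSpace α] (μ ν : Measure α) : ℝ≥0∞ :=
  if μ ≪ ν ∧ Integrable (fun x => Real.log (μ.rnDeriv ν x).toReal) μ
  then ENNReal.ofReal (∫ x, Real.log (μ.rnDeriv ν x).toReal ∂μ)
  else ⊤
section Part1

variable {α : Type*} [MeasurableSpace α] {μ ν : Measure α}

lemma klAux_lintegral_inv_rnDeriv [IsFiniteMeasure μ] [IsProbabilityMeasure ν]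
    (h : μ ≪ ν) : ∫⁻ x, (μ.rnDeriv ν x)⁻¹ ∂μ ≤ 1 := by
  nth_rewrite 1 [← Measure.withDensity_rnDeriv_eq μ ν h]
  rw [lintegral_withDensity_eq_lintegral_mul ν (Measure.measurable_rnDeriv μ ν)
    (g := fun x => (μ.rnDeriv ν x)⁻¹) (Measure.measurable_rnDeriv μ ν).inv]
  calc ∫⁻ x, (μ.rnDeriv ν x * (μ.rnDeriv ν x)⁻¹) ∂ν
      ≤ ∫⁻ _, 1 ∂ν := by
        refine lintegral_mono fun x => ?_
        rcases eq_or_ne (μ.rnDeriv ν x) 0 with h0 | h0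
        · simp [h0]
        rcases eq_or_ne (μ.rnDeriv ν x) ⊤ with ht | ht
        · simp [ht]
        · rw [ENNReal.mul_inv_cancel h0 ht]
    _ = 1 := by simp

lemma klAux_integrable_inv_rnDeriv [IsFiniteMeasure μ] [IsProbabilityMeasure ν]
    (h : μ ≪ ν) : Integrable (fun x => ((μ.rnDeriv ν x)⁻¹).toReal) μ := by
  refine ⟨((Measure.measurable_rnDeriv μ ν).inv.ennreal_toReal).aestronglyMeasurable, ?_⟩
  rw [hasFiniteIntegral_iff_norm]
  calc ∫⁻ x, ENNReal.ofReal ‖((μ.rnDeriv ν x)⁻¹).toReal‖ ∂μ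
      ≤ ∫⁻ x, (μ.rnDeriv ν x)⁻¹ ∂μ := by
        refine lintegral_mono fun x => ?_
        rw [Real.norm_eq_abs, abs_of_nonneg ENNReal.toReal_nonneg]
        exact ENNReal.ofReal_toReal_le
    _ ≤ 1 := klAux_lintegral_inv_rnDeriv h
    _ < ⊤ := by simp

lemma klAux_integral_inv_rnDeriv_le [IsProbabilityMeasure μ] [IsProbabilityMeasure ν]
    (h : μ ≪ ν) : ∫ x, ((μ.rnDeriv ν x)⁻¹).toReal ∂μ ≤ 1 := by
  rw [integral_toReal (f := fun x => (μ.rnDeriv ν x)⁻¹) ((Measure.measurable_rnDeriv μ ν).inv.aemeasurable) ?_]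
  · have := klAux_lintegral_inv_rnDeriv h
    exact ENNReal.toReal_le_of_le_ofReal zero_le_one (by simpa using this)
  · filter_upwards [Measure.rnDeriv_pos h] with x hx
    simp [ENNReal.inv_lt_top, hx]

/-- a.e. pointwise lower bound for llr. -/
lemma klAux_llr_ge [IsFiniteMeasure μ] [SigmaFinite ν] (h : μ ≪ ν) :
    ∀ᵐ x ∂μ, 1 - ((μ.rnDeriv ν x)⁻¹).toReal ≤ Real.log (μ.rnDeriv ν x).toReal := by
  filter_upwards [Measure.rnDeriv_pos h, h.ae_le (Measure.rnDeriv_lt_top μ ν)] with x h0 ht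
  have hpos : 0 < (μ.rnDeriv ν x).toReal := ENNReal.toReal_pos h0.ne' ht.ne
  have := Real.log_le_sub_one_of_pos (inv_pos.mpr hpos)
  rw [Real.log_inv] at this
  rw [ENNReal.toReal_inv]
  linarith

lemma klAux_integrable_neg_llr [IsProbabilityMeasure μ] [IsProbabilityMeasure ν]
    (h : μ ≪ ν) :
    Integrable (fun x => max (-(Real.log (μ.rnDeriv ν x).toReal)) 0) μ := by
  refine Integrable.mono' (klAux_integrable_inv_rnDeriv h)
    (((Measure.measurable_rnDeriv μ ν).ennreal_toReal.log.neg.max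
      measurable_const).aestronglyMeasurable) ?_
  filter_upwards [klAux_llr_ge h] with x hx
  rw [Real.norm_eq_abs, abs_of_nonneg (le_max_right _ _)]
  have h0 : (0:ℝ) ≤ ((μ.rnDeriv ν x)⁻¹).toReal := ENNReal.toReal_nonneg
  rcases le_or_gt (-(Real.log (μ.rnDeriv ν x).toReal)) 0 with hc | hc
  · rw [max_eq_right hc]; exact h0
  · rw [max_eq_left hc.le]; linarith

/-- Gibbs inequality. -/
lemma klAux_integral_llr_nonneg [IsProbabilityMeasure μ] [IsProbabilityMeasure ν]
    (h : μ ≪ ν) (hi : Integrable (fun x => Real.log (μ.rnDeriv ν x).toReal) μ) :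
    0 ≤ ∫ x, Real.log (μ.rnDeriv ν x).toReal ∂μ := by
  have hg : Integrable (fun x => 1 - ((μ.rnDeriv ν x)⁻¹).toReal) μ :=
    (integrable_const 1).sub (klAux_integrable_inv_rnDeriv h)
  calc (0:ℝ) ≤ 1 - ∫ x, ((μ.rnDeriv ν x)⁻¹).toReal ∂μ := by
        linarith [klAux_integral_inv_rnDeriv_le h]
    _ = ∫ x, (1 - ((μ.rnDeriv ν x)⁻¹).toReal) ∂μ := by
        rw [integral_sub (integrable_const 1) (klAux_integrable_inv_rnDeriv h)]
        simp
    _ ≤ ∫ x, Real.log (μ.rnDeriv ν x).toReal ∂μ :=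
        integral_mono_ae hg hi (klAux_llr_ge h)

lemma klAux_lintegral_ofReal_neg_llr_le_one [IsProbabilityMeasure μ] [IsProbabilityMeasure ν]
    (h : μ ≪ ν) :
    ∫⁻ x, ENNReal.ofReal (-(Real.log (μ.rnDeriv ν x).toReal)) ∂μ ≤ 1 := by
  calc ∫⁻ x, ENNReal.ofReal (-(Real.log (μ.rnDeriv ν x).toReal)) ∂μ
      ≤ ∫⁻ x, (μ.rnDeriv ν x)⁻¹ ∂μ := by
        refine lintegral_mono_ae ?_
        filter_upwards [klAux_llr_ge h] with x hx
        calc ENNReal.ofReal (-(Real.log (μ.rnDeriv ν x).toReal))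
            ≤ ENNReal.ofReal (((μ.rnDeriv ν x)⁻¹).toReal) :=
              ENNReal.ofReal_le_ofReal (by linarith)
          _ ≤ (μ.rnDeriv ν x)⁻¹ := ENNReal.ofReal_toReal_le
    _ ≤ 1 := klAux_lintegral_inv_rnDeriv h

lemma klAux_integral_neg_llr_le_one [IsProbabilityMeasure μ] [IsProbabilityMeasure ν]
    (h : μ ≪ ν) :
    ∫ x, max (-(Real.log (μ.rnDeriv ν x).toReal)) 0 ∂μ ≤ 1 := by
  have hint := klAux_integrable_neg_llr h
  have hnn : 0 ≤ᵐ[μ] fun x => max (-(Real.log (μ.rnDeriv ν x).toReal)) 0 :=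
    Filter.Eventually.of_forall fun x => le_max_right _ _
  have := ofReal_integral_eq_lintegral_ofReal hint hnn
  have hle : ∫⁻ x, ENNReal.ofReal (max (-(Real.log (μ.rnDeriv ν x).toReal)) 0) ∂μ ≤ 1 := by
    calc ∫⁻ x, ENNReal.ofReal (max (-(Real.log (μ.rnDeriv ν x).toReal)) 0) ∂μ
        = ∫⁻ x, ENNReal.ofReal (-(Real.log (μ.rnDeriv ν x).toReal)) ∂μ := by
          congr 1; funext x
          rcases le_or_gt (-(Real.log (μ.rnDeriv ν x).toReal)) 0 with hc | hc
          · rw [max_eq_right hc, ENNReal.ofReal_eq_zero.mpr hc]; simp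
          · rw [max_eq_left hc.le]
      _ ≤ 1 := klAux_lintegral_ofReal_neg_llr_le_one h
  rw [← this] at hle
  exact ENNReal.ofReal_le_one.mp hle

/-- lintegral of positive part bounded by klDiv + 1. -/
lemma klAux_lintegral_ofReal_llr_le [IsProbabilityMeasure μ] [IsProbabilityMeasure ν] :
    ∫⁻ x, ENNReal.ofReal (Real.log (μ.rnDeriv ν x).toReal) ∂μ ≤ klDiv μ ν + 1 := by
  unfold klDiv
  split_ifs with hc
  · obtain ⟨h, hi⟩ := hc
    have hmax : (fun x => max (Real.log (μ.rnDeriv ν x).toReal) 0)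
        = fun x => Real.log (μ.rnDeriv ν x).toReal
          + max (-(Real.log (μ.rnDeriv ν x).toReal)) 0 := by
      funext x
      rcases le_or_gt (Real.log (μ.rnDeriv ν x).toReal) 0 with hc' | hc'
      · rw [max_eq_right hc', max_eq_left (by linarith)]; ring
      · rw [max_eq_left hc'.le, max_eq_right (by linarith)]; ring
    have hint : Integrable (fun x => max (Real.log (μ.rnDeriv ν x).toReal) 0) μ := by
      rw [hmax]; exact hi.add (klAux_integrable_neg_llr h)
    calc ∫⁻ x, ENNReal.ofReal (Real.log (μ.rnDeriv ν x).toReal) ∂μ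
        = ∫⁻ x, ENNReal.ofReal (max (Real.log (μ.rnDeriv ν x).toReal) 0) ∂μ := by
          congr 1; funext x
          rcases le_or_gt (Real.log (μ.rnDeriv ν x).toReal) 0 with hc' | hc'
          · rw [max_eq_right hc', ENNReal.ofReal_eq_zero.mpr hc']; simp
          · rw [max_eq_left hc'.le]
      _ = ENNReal.ofReal (∫ x, max (Real.log (μ.rnDeriv ν x).toReal) 0 ∂μ) :=
          (ofReal_integral_eq_lintegral_ofReal hint
            (Filter.Eventually.of_forall fun x => le_max_right _ _)).symm
      _ ≤ ENNReal.ofReal ((∫ x, Real.log (μ.rnDeriv ν x).toReal ∂μ) + 1) := by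
          refine ENNReal.ofReal_le_ofReal ?_
          rw [hmax, integral_add hi (klAux_integrable_neg_llr h)]
          linarith [klAux_integral_neg_llr_le_one h]
      _ ≤ ENNReal.ofReal (∫ x, Real.log (μ.rnDeriv ν x).toReal ∂μ) + ENNReal.ofReal 1 :=
          ENNReal.ofReal_add_le
      _ = ENNReal.ofReal (∫ x, Real.log (μ.rnDeriv ν x).toReal ∂μ) + 1 := by simp
  · simp

end Part1

section Part2
variable {α β : Type*} [MeasurableSpace α] [MeasurableSpace β] {μ ν : Measure α}

lemma klAux_klDiv_of_not_ac (h : ¬ μ ≪ ν) : klDiv μ ν = ⊤ := by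
  unfold klDiv; rw [if_neg]; tauto

lemma klAux_klDiv_self (μ : Measure α) [SigmaFinite μ] : klDiv μ μ = 0 := by
  have h1 : (fun x => Real.log (μ.rnDeriv μ x).toReal) =ᵐ[μ] fun _ => (0:ℝ) := by
    filter_upwards [Measure.rnDeriv_self μ] with x hx
    simp [hx]
  unfold klDiv
  rw [if_pos ⟨Measure.AbsolutelyContinuous.rfl,
    (integrable_congr h1).mpr (integrable_zero _ _ _)⟩, integral_congr_ae h1]
  simp

/-- AC transfers along a measurable embedding, both directions. -/
lemma klAux_ac_map_iff {e : α → β} (he : MeasurableEmbedding e) (μ ν : Measure α) :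
    μ.map e ≪ ν.map e ↔ μ ≪ ν := by
  refine ⟨fun h => ?_, fun h => h.map he.measurable⟩
  refine Measure.AbsolutelyContinuous.mk fun s hsm hs0 => ?_
  have h1 : ν.map e (e '' s) = 0 := by
    rw [he.map_apply, he.injective.preimage_image]; exact hs0
  have h2 := h h1
  rw [he.map_apply, he.injective.preimage_image] at h2
  exact h2

lemma klAux_klDiv_map {e : α → β} (he : MeasurableEmbedding e)
    (μ ν : Measure α) [IsProbabilityMeasure μ] [IsProbabilityMeasure ν] :
    klDiv (μ.map e) (ν.map e) = klDiv μ ν := by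
  by_cases hac : μ ≪ ν
  · have hmac : μ.map e ≪ ν.map e := hac.map he.measurable
    have hre : (fun x => (μ.map e).rnDeriv (ν.map e) (e x)) =ᵐ[μ] μ.rnDeriv ν :=
      hac.ae_le (he.rnDeriv_map μ ν)
    have hkey : (fun x => Real.log ((μ.map e).rnDeriv (ν.map e) (e x)).toReal)
        =ᵐ[μ] fun x => Real.log (μ.rnDeriv ν x).toReal := by
      filter_upwards [hre] with x hx; rw [hx]
    have hmeas : AEStronglyMeasurable
        (fun y => Real.log ((μ.map e).rnDeriv (ν.map e) y).toReal) (μ.map e) :=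
      ((Measure.measurable_rnDeriv _ _).ennreal_toReal.log).aestronglyMeasurable
    have hint_iff : Integrable (fun y => Real.log ((μ.map e).rnDeriv (ν.map e) y).toReal)
        (μ.map e) ↔ Integrable (fun x => Real.log (μ.rnDeriv ν x).toReal) μ := by
      rw [integrable_map_measure hmeas he.measurable.aemeasurable]
      exact integrable_congr hkey
    unfold klDiv
    by_cases hint : Integrable (fun x => Real.log (μ.rnDeriv ν x).toReal) μ
    · rw [if_pos ⟨hmac, hint_iff.mpr hint⟩, if_pos ⟨hac, hint⟩,
        integral_map he.measurable.aemeasurable hmeas, integral_congr_ae hkey]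
    · rw [if_neg (show ¬((μ.map e ≪ ν.map e) ∧ _) from fun hh => hint (hint_iff.mp hh.2)),
        if_neg (show ¬((μ ≪ ν) ∧ _) from fun hh => hint hh.2)]
  · rw [klAux_klDiv_of_not_ac hac,
      klAux_klDiv_of_not_ac (fun h => hac ((klAux_ac_map_iff he μ ν).mp h))]

/-- Splitting integrability of a sum when negative parts are integrable. -/
lemma klAux_integrable_of_integrable_add {f g : α → ℝ}
    (hf : AEStronglyMeasurable f μ) (hg : AEStronglyMeasurable g μ)
    (hf' : Integrable (fun x => max (-f x) 0) μ)
    (hg' : Integrable (fun x => max (-g x) 0) μ)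
    (h : Integrable (fun x => f x + g x) μ) :
    Integrable f μ ∧ Integrable g μ := by
    have key : ∀ (f g : α → ℝ), AEStronglyMeasurable f μ →
        Integrable (fun x => max (-f x) 0) μ → Integrable (fun x => max (-g x) 0) μ →
        Integrable (fun x => f x + g x) μ → Integrable f μ := by
      intro f g hf hf' hg' h
      refine Integrable.mono' ((h.abs.add hg').add hf') hf
        (Filter.Eventually.of_forall fun x => ?_)
      simp only [Real.norm_eq_abs, Pi.add_apply]
      rcases le_total (f x) 0 with hc | hc
      · have : |f x| = -f x := abs_of_nonpos hc
        rw [this]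
        have h1 : -f x ≤ max (-f x) 0 := le_max_left _ _
        have h2 : (0:ℝ) ≤ |f x + g x| + max (-g x) 0 := by positivity
        linarith
      · have : |f x| = f x := abs_of_nonneg hc
        rw [this]
        have h1 : f x = (f x + g x) + (-g x) := by ring
        have h2 : f x + g x ≤ |f x + g x| := le_abs_self _
        have h3 : -g x ≤ max (-g x) 0 := le_max_left _ _
        have h4 : (0:ℝ) ≤ max (-f x) 0 := le_max_right _ _
        linarith
    refine ⟨key f g hf hf' hg' h, key g f hg hg' hf' ?_⟩
    exact h.congr (Filter.Eventually.of_forall fun x => by ring)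

end Part2
section Part3
variable {α γ : Type*} [MeasurableSpace α] [MeasurableSpace γ]

lemma klAux_withDensity_compProd_left (ν : Measure α) [SFinite ν]
    {f : α → ℝ≥0∞} (hf : Measurable f) (κ : Kernel α γ) [IsSFiniteKernel κ] :
    (ν.withDensity f) ⊗ₘ κ = (ν ⊗ₘ κ).withDensity (fun p => f p.1) := by
  ext s hs
  rw [Measure.compProd_apply hs,
    lintegral_withDensity_eq_lintegral_mul ν hf (Kernel.measurable_kernel_prodMk_left hs),
    withDensity_apply _ hs, ← lintegral_indicator hs,
    Measure.lintegral_compProd (f := s.indicator fun p : α × γ => f p.1)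
      ((hf.comp measurable_fst).indicator hs)]
  congr 1
  funext a
  have : ∀ b, s.indicator (fun p => f p.1) (a, b)
      = (Prod.mk a ⁻¹' s).indicator (fun _ => f a) b := by
    intro b
    by_cases hb : (a, b) ∈ s <;> simp [Set.indicator_apply, hb, Set.mem_preimage]
  simp_rw [this]
  rw [lintegral_indicator (measurable_prodMk_left hs), setLIntegral_const]
  rfl

lemma klAux_compProd_withDensity_right (ν : Measure α) [SFinite ν]
    (η : Kernel α γ) [IsSFiniteKernel η] {g : α → γ → ℝ≥0∞}
    (hg : Measurable (Function.uncurry g))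
    [IsSFiniteKernel (Kernel.withDensity η g)] :
    ν ⊗ₘ (Kernel.withDensity η g) = (ν ⊗ₘ η).withDensity (fun p => g p.1 p.2) := by
  ext s hs
  rw [Measure.compProd_apply hs, withDensity_apply _ hs, ← lintegral_indicator hs,
    Measure.lintegral_compProd (f := s.indicator fun p : α × γ => g p.1 p.2)
      ((hg.comp (measurable_fst.prodMk measurable_snd)).indicator hs)]
  congr 1
  funext a
  rw [Kernel.withDensity_apply _ hg, withDensity_apply _ (measurable_prodMk_left hs)]
  have : ∀ b, s.indicator (fun p => g p.1 p.2) (a, b)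
      = (Prod.mk a ⁻¹' s).indicator (fun b => g a b) b := by
    intro b
    by_cases hb : (a, b) ∈ s <;> simp [Set.indicator_apply, hb, Set.mem_preimage]
  simp_rw [this]
  rw [lintegral_indicator (measurable_prodMk_left hs)]

lemma klAux_mutuallySingular_compProd_left {μ₁ μ₂ : Measure α} (h : μ₁ ⟂ₘ μ₂)
    [SFinite μ₁] [SFinite μ₂]
    (κ η : Kernel α γ) [IsSFiniteKernel κ] [IsSFiniteKernel η] :
    μ₁ ⊗ₘ κ ⟂ₘ μ₂ ⊗ₘ η := by
  obtain ⟨s, hsm, h1, h2⟩ := h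
  refine ⟨s ×ˢ Set.univ, hsm.prod MeasurableSet.univ, ?_, ?_⟩
  · rw [Measure.compProd_apply_prod hsm MeasurableSet.univ]
    exact setLIntegral_measure_zero _ _ h1
  · have : (s ×ˢ (Set.univ : Set γ))ᶜ = sᶜ ×ˢ Set.univ := by
      ext p; simp
    rw [this, Measure.compProd_apply_prod hsm.compl MeasurableSet.univ]
    exact setLIntegral_measure_zero _ _ h2

variable [MeasurableSpace.CountableOrCountablyGenerated α γ]

lemma klAux_compProd_singularPart_right (ν' ν : Measure α) [SFinite ν'] [SFinite ν]
    (κ η : Kernel α γ) [IsFiniteKernel κ] [IsFiniteKernel η] :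
    ν' ⊗ₘ (κ.singularPart η) ⟂ₘ ν ⊗ₘ η := by
  have hpre : ∀ a : α, Prod.mk a ⁻¹' Kernel.mutuallySingularSet κ η
      = Kernel.mutuallySingularSetSlice κ η a := fun _ => rfl
  refine ⟨(Kernel.mutuallySingularSet κ η)ᶜ,
    (Kernel.measurableSet_mutuallySingularSet κ η).compl, ?_, ?_⟩
  · rw [Measure.compProd_apply (Kernel.measurableSet_mutuallySingularSet κ η).compl]
    simp [Set.preimage_compl, hpre, Kernel.singularPart_compl_mutuallySingularSetSlice]
  · rw [compl_compl, Measure.compProd_apply (Kernel.measurableSet_mutuallySingularSet κ η)]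
    simp [hpre, Kernel.measure_mutuallySingularSetSlice]

/-- Radon–Nikodym derivative of a composition-product. -/
lemma klAux_rnDeriv_compProd (μ ν : Measure α) [IsFiniteMeasure μ] [IsFiniteMeasure ν]
    (κ η : Kernel α γ) [IsFiniteKernel κ] [IsFiniteKernel η] :
    (fun p => μ.rnDeriv ν p.1 * Kernel.rnDeriv κ η p.1 p.2)
      =ᵐ[ν ⊗ₘ η] (μ ⊗ₘ κ).rnDeriv (ν ⊗ₘ η) := by
  have hF : Measurable (fun p : α × γ => μ.rnDeriv ν p.1 * Kernel.rnDeriv κ η p.1 p.2) :=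
    ((μ.measurable_rnDeriv ν).comp measurable_fst).mul (Kernel.measurable_rnDeriv κ η)
  have h1 : (ν.withDensity (μ.rnDeriv ν)) ⊗ₘ (Kernel.withDensity η (Kernel.rnDeriv κ η))
      = (ν ⊗ₘ η).withDensity (fun p => μ.rnDeriv ν p.1 * Kernel.rnDeriv κ η p.1 p.2) := by
    have hf1 : Measurable fun p : α × γ => μ.rnDeriv ν p.1 :=
      (μ.measurable_rnDeriv ν).comp measurable_fst
    rw [klAux_withDensity_compProd_left ν (μ.measurable_rnDeriv ν),
      klAux_compProd_withDensity_right ν η (Kernel.measurable_rnDeriv κ η),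
      ← withDensity_mul _ (Kernel.measurable_rnDeriv κ η) hf1]
    congr 1
    funext p
    simp [mul_comm]
  have hκd : Kernel.withDensity η (Kernel.rnDeriv κ η) + κ.singularPart η = κ :=
    Kernel.rnDeriv_add_singularPart κ η
  have hadd : μ ⊗ₘ κ
      = (μ.singularPart ν ⊗ₘ κ + (ν.withDensity (μ.rnDeriv ν)) ⊗ₘ (κ.singularPart η))
        + (ν ⊗ₘ η).withDensity (fun p => μ.rnDeriv ν p.1 * Kernel.rnDeriv κ η p.1 p.2) := by
    conv_lhs => rw [μ.haveLebesgueDecomposition_add ν, Measure.compProd_add_left]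
    have h2 : (ν.withDensity (μ.rnDeriv ν)) ⊗ₘ κ
        = (ν.withDensity (μ.rnDeriv ν)) ⊗ₘ (Kernel.withDensity η (Kernel.rnDeriv κ η))
          + (ν.withDensity (μ.rnDeriv ν)) ⊗ₘ (κ.singularPart η) := by
      rw [← Measure.compProd_add_right, hκd]
    rw [h2, h1]
    abel
  have hsing : (μ.singularPart ν ⊗ₘ κ + (ν.withDensity (μ.rnDeriv ν)) ⊗ₘ (κ.singularPart η))
      ⟂ₘ ν ⊗ₘ η :=
    Measure.MutuallySingular.add_left
      (klAux_mutuallySingular_compProd_left (μ.mutuallySingular_singularPart ν) κ η)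
      (klAux_compProd_singularPart_right _ _ κ η)
  exact Measure.eq_rnDeriv hF hsing hadd

/-- Absolute continuity of compProds. -/
lemma klAux_ac_compProd_iff (μ ν : Measure α) [IsProbabilityMeasure μ] [IsProbabilityMeasure ν]
    (κ η : Kernel α γ) [IsMarkovKernel κ] [IsMarkovKernel η] :
    μ ⊗ₘ κ ≪ ν ⊗ₘ η ↔ μ ≪ ν ∧ ∀ᵐ a ∂μ, κ a ≪ η a := by
  constructor
  · intro h
    refine ⟨Measure.absolutelyContinuous_of_compProd h, ?_⟩
    have h0 : (ν ⊗ₘ η) (Kernel.mutuallySingularSet κ η) = 0 := by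
      rw [Measure.compProd_apply (Kernel.measurableSet_mutuallySingularSet κ η)]
      have : ∀ a, η a (Prod.mk a ⁻¹' Kernel.mutuallySingularSet κ η) = 0 := fun a =>
        Kernel.measure_mutuallySingularSetSlice κ η a
      simp [this]
    have h1 := h h0
    rw [Measure.compProd_apply (Kernel.measurableSet_mutuallySingularSet κ η),
      lintegral_eq_zero_iff
        (Kernel.measurable_kernel_prodMk_left
          (Kernel.measurableSet_mutuallySingularSet κ η))] at h1
    filter_upwards [h1] with a ha
    rw [← Kernel.singularPart_eq_zero_iff_absolutelyContinuous,
      Kernel.singularPart_eq_zero_iff_measure_eq_zero]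
    exact ha
  · rintro ⟨h1, h2⟩
    exact h1.compProd h2

end Part3

section Part4
variable {α γ : Type*} [MeasurableSpace α] [MeasurableSpace γ]
  [MeasurableSpace.CountableOrCountablyGenerated α γ]

lemma klAux_ofReal_max (x : ℝ) : ENNReal.ofReal (max x 0) = ENNReal.ofReal x := by
  rcases le_total x 0 with h | h
  · rw [max_eq_right h, ENNReal.ofReal_eq_zero.mpr h]; simp
  · rw [max_eq_left h]

/-- **Chain rule for KL divergence over a composition-product.** -/
theorem klAux_klDiv_compProd (μ ν : Measure α) [IsProbabilityMeasure μ] [IsProbabilityMeasure ν]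
    (κ η : Kernel α γ) [IsMarkovKernel κ] [IsMarkovKernel η] :
    klDiv (μ ⊗ₘ κ) (ν ⊗ₘ η) = klDiv μ ν + ∫⁻ a, klDiv (κ a) (η a) ∂μ := by
  by_cases hac : μ ⊗ₘ κ ≪ ν ⊗ₘ η
  case neg =>
    rw [klAux_klDiv_of_not_ac hac]
    rw [klAux_ac_compProd_iff] at hac
    by_cases h1 : μ ≪ ν
    · have h2 : ¬ ∀ᵐ a ∂μ, κ a ≪ η a := fun h => hac ⟨h1, h⟩
      have hs : MeasurableSet {a | κ a ≪ η a} := Kernel.measurableSet_absolutelyContinuous κ η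
      have hpos : μ {a | κ a ≪ η a}ᶜ ≠ 0 := by
        intro h0
        exact h2 (ae_iff.mpr h0)
      have htop : ∫⁻ a, klDiv (κ a) (η a) ∂μ = ⊤ := by
        rw [eq_top_iff]
        calc (⊤:ℝ≥0∞) = ⊤ * μ {a | κ a ≪ η a}ᶜ := (ENNReal.top_mul hpos).symm
          _ = ∫⁻ _ in {a | κ a ≪ η a}ᶜ, ⊤ ∂μ := (setLIntegral_const _ _).symm
          _ = ∫⁻ a, ({a | κ a ≪ η a}ᶜ).indicator (fun _ => (⊤:ℝ≥0∞)) a ∂μ :=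
              (lintegral_indicator hs.compl _).symm
          _ ≤ ∫⁻ a, klDiv (κ a) (η a) ∂μ := by
              refine lintegral_mono fun a => ?_
              by_cases ha : a ∈ {a | κ a ≪ η a}ᶜ
              · rw [Set.indicator_of_mem ha, klAux_klDiv_of_not_ac ha]
              · rw [Set.indicator_of_notMem ha]
                exact zero_le
      rw [htop, add_top]
    · rw [klAux_klDiv_of_not_ac h1, top_add]
  case pos =>
    obtain ⟨hμν, hκη⟩ := (klAux_ac_compProd_iff μ ν κ η).mp hac
    set F : α × γ → ℝ := fun p => Real.log (μ.rnDeriv ν p.1).toReal with hFdef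
    set L : α × γ → ℝ := fun p => Real.log (Kernel.rnDeriv κ η p.1 p.2).toReal with hLdef
    have hFmeas : Measurable F :=
      ((μ.measurable_rnDeriv ν).comp measurable_fst).ennreal_toReal.log
    have hLmeas : Measurable L := (Kernel.measurable_rnDeriv κ η).ennreal_toReal.log
    -- the key a.e. identity
    have hAE : (fun p => Real.log ((μ ⊗ₘ κ).rnDeriv (ν ⊗ₘ η) p).toReal)
        =ᵐ[μ ⊗ₘ κ] fun p => F p + L p := by
      have hrn := hac.ae_le (klAux_rnDeriv_compProd μ ν κ η)
      have hfst : ∀ᵐ p ∂(μ ⊗ₘ κ), 0 < μ.rnDeriv ν p.1 ∧ μ.rnDeriv ν p.1 < ⊤ := by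
        refine Measure.ae_compProd_of_ae_ae
          (show MeasurableSet ((fun p : α × γ => μ.rnDeriv ν p.1) ⁻¹' Set.Ioo 0 ⊤) from
            ((μ.measurable_rnDeriv ν).comp measurable_fst) measurableSet_Ioo) ?_
        filter_upwards [Measure.rnDeriv_pos hμν, hμν.ae_le (Measure.rnDeriv_lt_top μ ν)]
          with a h1 h2
        exact Filter.Eventually.of_forall fun b => ⟨h1, h2⟩
      have hsnd : ∀ᵐ p ∂(μ ⊗ₘ κ), 0 < Kernel.rnDeriv κ η p.1 p.2
          ∧ Kernel.rnDeriv κ η p.1 p.2 < ⊤ := by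
        refine Measure.ae_compProd_of_ae_ae
          (show MeasurableSet ((fun p : α × γ => Kernel.rnDeriv κ η p.1 p.2) ⁻¹' Set.Ioo 0 ⊤)
            from (Kernel.measurable_rnDeriv κ η) measurableSet_Ioo) ?_
        filter_upwards [hκη] with a ha
        filter_upwards [Kernel.rnDeriv_pos ha, ha.ae_le (Kernel.rnDeriv_ne_top κ η)]
          with b hb1 hb2
        exact ⟨hb1, lt_top_iff_ne_top.mpr hb2⟩
      filter_upwards [hrn, hfst, hsnd] with p h1 h2 h3
      rw [← h1, ENNReal.toReal_mul, hFdef, hLdef]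
      simp only
      rw [Real.log_mul (ENNReal.toReal_pos h2.1.ne' h2.2.ne).ne'
        (ENNReal.toReal_pos h3.1.ne' h3.2.ne).ne']
    -- integrability of negative parts
    have hmap_fst : (μ ⊗ₘ κ).map Prod.fst = μ := Measure.fst_compProd μ κ
    have hkey_int : ∀ (g : α → ℝ), Measurable g →
        (Integrable (fun p : α × γ => g p.1) (μ ⊗ₘ κ) ↔ Integrable g μ) := by
      intro g hg
      have h := integrable_map_measure (f := Prod.fst) (μ := μ ⊗ₘ κ)
        hg.aestronglyMeasurable measurable_fst.aemeasurable
      rw [hmap_fst] at h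
      exact h.symm
    have hkey_integral : ∀ (g : α → ℝ), Measurable g →
        ∫ p, g p.1 ∂(μ ⊗ₘ κ) = ∫ a, g a ∂μ := by
      intro g hg
      have h := integral_map (φ := Prod.fst) (μ := μ ⊗ₘ κ)
        measurable_fst.aemeasurable hg.aestronglyMeasurable
      rw [hmap_fst] at h
      exact h.symm
    have hFneg : Integrable (fun p => max (-(F p)) 0) (μ ⊗ₘ κ) := by
      exact (hkey_int (fun a => max (-(Real.log (μ.rnDeriv ν a).toReal)) 0)
        (((μ.measurable_rnDeriv ν).ennreal_toReal.log).neg.max measurable_const)).mpr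
        (klAux_integrable_neg_llr hμν)
    have hLae : ∀ᵐ a ∂μ, (fun b => L (a, b))
        =ᵐ[κ a] fun b => Real.log ((κ a).rnDeriv (η a) b).toReal := by
      filter_upwards [hκη] with a ha
      filter_upwards [ha.ae_le (Kernel.rnDeriv_eq_rnDeriv_measure (κ := κ) (η := η) (a := a))]
        with b hb
      rw [hLdef]; simp only; rw [hb]
    have hLneg_lint : ∀ᵐ a ∂μ, ∫⁻ b, ENNReal.ofReal (-(L (a, b))) ∂(κ a) ≤ 1 := by
      filter_upwards [hκη, hLae] with a ha hae
      calc ∫⁻ b, ENNReal.ofReal (-(L (a, b))) ∂(κ a)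
          = ∫⁻ b, ENNReal.ofReal (-(Real.log ((κ a).rnDeriv (η a) b).toReal)) ∂(κ a) := by
            refine lintegral_congr_ae ?_
            filter_upwards [hae] with b hb
            rw [hb]
        _ ≤ 1 := klAux_lintegral_ofReal_neg_llr_le_one ha
    have hLneg : Integrable (fun p => max (-(L p)) 0) (μ ⊗ₘ κ) := by
      refine ⟨(hLmeas.neg.max measurable_const).aestronglyMeasurable, ?_⟩
      rw [hasFiniteIntegral_iff_norm]
      have hcalc : ∫⁻ p, ENNReal.ofReal ‖max (-(L p)) 0‖ ∂(μ ⊗ₘ κ)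
          = ∫⁻ p, ENNReal.ofReal (-(L p)) ∂(μ ⊗ₘ κ) := by
        congr 1; funext p
        rw [Real.norm_eq_abs, abs_of_nonneg (le_max_right _ _), klAux_ofReal_max]
      rw [hcalc, Measure.lintegral_compProd (f := fun p => ENNReal.ofReal (-(L p))) (hLmeas.neg.ennreal_ofReal)]
      calc ∫⁻ a, ∫⁻ b, ENNReal.ofReal (-(L (a, b))) ∂(κ a) ∂μ
          ≤ ∫⁻ _, 1 ∂μ := lintegral_mono_ae hLneg_lint
        _ = 1 := by simp
        _ < ⊤ := by simp
    -- integrability equivalence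
    have hFcomp_int_iff : Integrable (fun p : α × γ => F p) (μ ⊗ₘ κ)
        ↔ Integrable (fun a => Real.log (μ.rnDeriv ν a).toReal) μ :=
      hkey_int (fun a => Real.log (μ.rnDeriv ν a).toReal)
        ((μ.measurable_rnDeriv ν).ennreal_toReal.log)
    by_cases hint : Integrable (fun p => Real.log ((μ ⊗ₘ κ).rnDeriv (ν ⊗ₘ η) p).toReal) (μ ⊗ₘ κ)
    · -- everything is finite
      have hintFL : Integrable (fun p => F p + L p) (μ ⊗ₘ κ) := hint.congr hAE
      obtain ⟨hFint, hLint⟩ := klAux_integrable_of_integrable_add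
        hFmeas.aestronglyMeasurable hLmeas.aestronglyMeasurable hFneg hLneg hintFL
      have hF'int : Integrable (fun a => Real.log (μ.rnDeriv ν a).toReal) μ :=
        hFcomp_int_iff.mp hFint
      -- decompose integral
      have hIF : ∫ p, F p ∂(μ ⊗ₘ κ) = ∫ a, Real.log (μ.rnDeriv ν a).toReal ∂μ :=
        hkey_integral (fun a => Real.log (μ.rnDeriv ν a).toReal)
          ((μ.measurable_rnDeriv ν).ennreal_toReal.log)
      obtain ⟨hLslice, hLnorm⟩ := (Measure.integrable_compProd_iff
        hLmeas.aestronglyMeasurable).mp hLint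
      have hIL : ∫ p, L p ∂(μ ⊗ₘ κ) = ∫ a, ∫ b, L (a, b) ∂(κ a) ∂μ :=
        Measure.integral_compProd hLint
      -- identify the conditional KL with the inner integral
      have hklDiv_ae : ∀ᵐ a ∂μ, klDiv (κ a) (η a) = ENNReal.ofReal (∫ b, L (a, b) ∂(κ a)) := by
        filter_upwards [hκη, hLae, hLslice] with a ha hae hint_a
        unfold klDiv
        rw [if_pos ⟨ha, (integrable_congr hae).mp hint_a⟩,
          integral_congr_ae hae.symm]
      have hG_nonneg : ∀ᵐ a ∂μ, 0 ≤ ∫ b, L (a, b) ∂(κ a) := by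
        filter_upwards [hκη, hLae, hLslice] with a ha hae hint_a
        rw [integral_congr_ae hae]
        exact klAux_integral_llr_nonneg ha ((integrable_congr hae).mp hint_a)
      have hG_int : Integrable (fun a => ∫ b, L (a, b) ∂(κ a)) μ := by
        refine Integrable.mono' hLnorm
          (hLmeas.stronglyMeasurable.integral_kernel_prod_right').aestronglyMeasurable ?_
        filter_upwards with a
        exact norm_integral_le_integral_norm _
      have hlint : ∫⁻ a, klDiv (κ a) (η a) ∂μ = ENNReal.ofReal (∫ p, L p ∂(μ ⊗ₘ κ)) := by
        have h1 : ∫⁻ a, klDiv (κ a) (η a) ∂μ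
            = ∫⁻ a, ENNReal.ofReal (∫ b, L (a, b) ∂(κ a)) ∂μ := lintegral_congr_ae hklDiv_ae
        rw [h1, ← ofReal_integral_eq_lintegral_ofReal hG_int hG_nonneg, hIL]
      have hIL_nonneg : 0 ≤ ∫ p, L p ∂(μ ⊗ₘ κ) := by
        rw [hIL]
        exact integral_nonneg_of_ae hG_nonneg
      have hIF_nonneg : 0 ≤ ∫ a, Real.log (μ.rnDeriv ν a).toReal ∂μ :=
        klAux_integral_llr_nonneg hμν hF'int
      have hKL1 : klDiv (μ ⊗ₘ κ) (ν ⊗ₘ η)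
          = ENNReal.ofReal (∫ p, Real.log ((μ ⊗ₘ κ).rnDeriv (ν ⊗ₘ η) p).toReal ∂(μ ⊗ₘ κ)) := by
        unfold klDiv; rw [if_pos ⟨hac, hint⟩]
      have hKL2 : klDiv μ ν
          = ENNReal.ofReal (∫ a, Real.log (μ.rnDeriv ν a).toReal ∂μ) := by
        unfold klDiv; rw [if_pos ⟨hμν, hF'int⟩]
      rw [hKL1, hKL2, hlint, integral_congr_ae hAE, integral_add hFint hLint, hIF,
        ENNReal.ofReal_add hIF_nonneg hIL_nonneg]
    · -- the total llr is not integrable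
      have hLHS : klDiv (μ ⊗ₘ κ) (ν ⊗ₘ η) = ⊤ := by
        unfold klDiv; rw [if_neg (fun hh => hint hh.2)]
      rw [hLHS]
      have hintFL : ¬ Integrable (fun p => F p + L p) (μ ⊗ₘ κ) := fun h =>
        hint ((integrable_congr hAE).mpr h)
      by_cases hB : Integrable (fun a => Real.log (μ.rnDeriv ν a).toReal) μ
      · -- then L is not integrable, so the conditional term is ⊤
        have hLnotint : ¬ Integrable L (μ ⊗ₘ κ) := by
          intro hL
          exact hintFL ((hFcomp_int_iff.mpr hB).add hL)
        have hLpos_top : ∫⁻ p, ENNReal.ofReal (max (L p) 0) ∂(μ ⊗ₘ κ) = ⊤ := by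
          by_contra hfin
          refine hLnotint ⟨hLmeas.aestronglyMeasurable, ?_⟩
          rw [hasFiniteIntegral_iff_norm]
          have hbound : ∀ p, ENNReal.ofReal ‖L p‖
              ≤ ENNReal.ofReal (max (L p) 0) + ENNReal.ofReal (-(L p)) := by
            intro p
            rw [Real.norm_eq_abs]
            rcases le_total (L p) 0 with hc | hc
            · rw [abs_of_nonpos hc]
              exact le_add_left (ENNReal.ofReal_le_ofReal (le_refl _))
            · rw [abs_of_nonneg hc]
              exact le_add_right (ENNReal.ofReal_le_ofReal (le_max_left _ _))
          calc ∫⁻ p, ENNReal.ofReal ‖L p‖ ∂(μ ⊗ₘ κ)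
              ≤ ∫⁻ p, (ENNReal.ofReal (max (L p) 0) + ENNReal.ofReal (-(L p))) ∂(μ ⊗ₘ κ) :=
                lintegral_mono hbound
            _ = ∫⁻ p, ENNReal.ofReal (max (L p) 0) ∂(μ ⊗ₘ κ)
                + ∫⁻ p, ENNReal.ofReal (-(L p)) ∂(μ ⊗ₘ κ) :=
                lintegral_add_left ((hLmeas.max measurable_const).ennreal_ofReal) _
            _ < ⊤ := by
                refine ENNReal.add_lt_top.mpr ⟨lt_top_iff_ne_top.mpr hfin, ?_⟩
                rw [Measure.lintegral_compProd (f := fun p => ENNReal.ofReal (-(L p))) (hLmeas.neg.ennreal_ofReal)]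
                calc ∫⁻ a, ∫⁻ b, ENNReal.ofReal (-(L (a, b))) ∂(κ a) ∂μ
                    ≤ ∫⁻ _, 1 ∂μ := lintegral_mono_ae hLneg_lint
                  _ = 1 := by simp
                  _ < ⊤ := by simp
        have hbnd : ∀ᵐ a ∂μ, ∫⁻ b, ENNReal.ofReal (max (L (a, b)) 0) ∂(κ a)
            ≤ klDiv (κ a) (η a) + 1 := by
          filter_upwards [hLae] with a hae
          calc ∫⁻ b, ENNReal.ofReal (max (L (a, b)) 0) ∂(κ a)
              = ∫⁻ b, ENNReal.ofReal (Real.log ((κ a).rnDeriv (η a) b).toReal) ∂(κ a) := by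
                refine lintegral_congr_ae ?_
                filter_upwards [hae] with b hb
                rw [klAux_ofReal_max, hb]
            _ ≤ klDiv (κ a) (η a) + 1 := klAux_lintegral_ofReal_llr_le
        have htop : ∫⁻ a, klDiv (κ a) (η a) ∂μ = ⊤ := by
          by_contra hfin
          have hle : ∫⁻ p, ENNReal.ofReal (max (L p) 0) ∂(μ ⊗ₘ κ)
              ≤ (∫⁻ a, klDiv (κ a) (η a) ∂μ) + 1 := by
            rw [Measure.lintegral_compProd ((hLmeas.max measurable_const).ennreal_ofReal)]
            calc ∫⁻ a, ∫⁻ b, ENNReal.ofReal (max (L (a, b)) 0) ∂(κ a) ∂μ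
                ≤ ∫⁻ a, (klDiv (κ a) (η a) + 1) ∂μ := lintegral_mono_ae hbnd
              _ = (∫⁻ a, klDiv (κ a) (η a) ∂μ) + 1 := by
                  rw [lintegral_add_right _ measurable_const]
                  simp
          rw [hLpos_top] at hle
          refine hfin (eq_top_iff.mpr ?_)
          rcases ENNReal.add_eq_top.mp (top_le_iff.mp hle) with h | h
          · exact le_of_eq h.symm
          · simp at h
        rw [htop, add_top]
      · have : klDiv μ ν = ⊤ := by
          unfold klDiv; rw [if_neg (fun hh => hB hh.2)]
        rw [this, top_add]
end Part4

section Part5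
variable {α γ : Type*} [MeasurableSpace α] [MeasurableSpace γ]
  [MeasurableSpace.CountableOrCountablyGenerated α γ]

/-- Measurability of the conditional KL divergence. -/
lemma klAux_measurable_klDiv (κ η : Kernel α γ) [IsFiniteKernel κ] [IsFiniteKernel η] :
    Measurable (fun a => klDiv (κ a) (η a)) := by
  classical
  set G : α → γ → ℝ := fun a b => Real.log (Kernel.rnDeriv κ η a b).toReal with hGdef
  have hGmeas : Measurable (Function.uncurry G) :=
    (Kernel.measurable_rnDeriv κ η).ennreal_toReal.log
  have hid : ∀ a, klDiv (κ a) (η a)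
      = if (κ a ≪ η a ∧ Integrable (G a) (κ a))
        then ENNReal.ofReal (∫ b, G a b ∂(κ a)) else ⊤ := by
    intro a
    by_cases hA : κ a ≪ η a
    · have hae : G a =ᵐ[κ a] fun b => Real.log ((κ a).rnDeriv (η a) b).toReal := by
        filter_upwards [hA.ae_le (Kernel.rnDeriv_eq_rnDeriv_measure (κ := κ) (η := η) (a := a))]
          with b hb
        rw [hGdef]; simp only; rw [hb]
      unfold klDiv
      by_cases hI : Integrable (G a) (κ a)
      · rw [if_pos ⟨hA, (integrable_congr hae).mp hI⟩, if_pos ⟨hA, hI⟩,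
          integral_congr_ae hae.symm]
      · rw [if_neg (fun hh => hI ((integrable_congr hae).mpr hh.2)), if_neg (fun hh => hI hh.2)]
    · unfold klDiv
      rw [if_neg (fun hh => hA hh.1), if_neg (fun hh => hA hh.1)]
  simp_rw [hid]
  refine Measurable.ite ?_ ?_ measurable_const
  · exact (Kernel.measurableSet_absolutelyContinuous κ η).inter
      (measurableSet_kernel_integrable hGmeas.stronglyMeasurable)
  · exact (hGmeas.stronglyMeasurable.integral_kernel_prod_right).measurable.ennreal_ofReal

end Part5

section Part6

/-- Tensorization of KL divergence for finite products of probability measures. -/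
lemma klAux_klDiv_pi : ∀ (k : ℕ) (S : Fin k → Type u) [∀ i, MeasurableSpace (S i)]
    [∀ i, StandardBorelSpace (S i)] [∀ i, Nonempty (S i)]
    (μ ν : ∀ i, Measure (S i)) [∀ i, IsProbabilityMeasure (μ i)]
    [∀ i, IsProbabilityMeasure (ν i)],
    klDiv (Measure.pi μ) (Measure.pi ν) = ∑ i, klDiv (μ i) (ν i) := by
  intro k
  induction k with
  | zero =>
    intro S _ _ _ μ ν _ _
    haveI : Subsingleton (∀ i : Fin 0, S i) := ⟨fun a b => funext fun i => i.elim0⟩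
    have hEq : Measure.pi μ = Measure.pi ν := by
      ext s hs
      rcases s.eq_empty_or_nonempty with rfl | ⟨x, hx⟩
      · simp
      · have huniv : s = Set.univ := Set.eq_univ_of_forall fun y => by
          rwa [Subsingleton.elim y x]
        rw [huniv]
        simp [measure_univ]
    rw [hEq, klAux_klDiv_self]
    simp
  | succ n ih =>
    intro S _ _ _ μ ν _ _
    set e := MeasurableEquiv.piFinSuccAbove S 0 with he
    have hP := measurePreserving_piFinSuccAbove μ 0
    have hQ := measurePreserving_piFinSuccAbove ν 0
    calc klDiv (Measure.pi μ) (Measure.pi ν)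
        = klDiv ((Measure.pi μ).map e) ((Measure.pi ν).map e) :=
          (klAux_klDiv_map e.measurableEmbedding _ _).symm
      _ = klDiv ((μ 0).prod (Measure.pi fun j => μ (Fin.succAbove 0 j)))
          ((ν 0).prod (Measure.pi fun j => ν (Fin.succAbove 0 j))) := by
          rw [hP.map_eq, hQ.map_eq]
      _ = klDiv ((μ 0) ⊗ₘ Kernel.const _ (Measure.pi fun j => μ (Fin.succAbove 0 j)))
          ((ν 0) ⊗ₘ Kernel.const _ (Measure.pi fun j => ν (Fin.succAbove 0 j))) := by
          rw [Measure.compProd_const, Measure.compProd_const]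
      _ = klDiv (μ 0) (ν 0)
          + ∫⁻ _, klDiv (Measure.pi fun j => μ (Fin.succAbove 0 j))
              (Measure.pi fun j => ν (Fin.succAbove 0 j)) ∂(μ 0) := by
          rw [klAux_klDiv_compProd]
          simp only [Kernel.const_apply]
      _ = klDiv (μ 0) (ν 0)
          + klDiv (Measure.pi fun j => μ (Fin.succAbove 0 j))
              (Measure.pi fun j => ν (Fin.succAbove 0 j)) := by
          rw [lintegral_const, measure_univ, mul_one]
      _ = klDiv (μ 0) (ν 0)
          + ∑ j : Fin n, klDiv (μ (Fin.succAbove 0 j)) (ν (Fin.succAbove 0 j)) := by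
          rw [ih (fun j => S (Fin.succAbove 0 j)) (fun j => μ (Fin.succAbove 0 j))
            (fun j => ν (Fin.succAbove 0 j))]
      _ = ∑ i, klDiv (μ i) (ν i) := (Fin.sum_univ_succAbove (fun i => klDiv (μ i) (ν i)) 0).symm

end Part6


/-- **Additivity of KL divergence over subintervals for reciprocal measures.** A path on
`[0,T]` is encoded as the tuple of its segments `ω i : S i` over the subintervals
`[t_{i-1}, t_i]`, `i : Fin k`; `π : Ω → F` is the skeleton map recording the values
`(X_{t_0}, ..., X_{t_k})`, and the endpoint pair of segment `i` is
`(f i.castSucc, f i.succ)` for a skeleton `f`. Suppose `P` and `Q` are both reciprocal w.r.t.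
`𝒯`: conditionally on the skeleton `f`, the segments are independent with bridge laws
`κP i (f i.castSucc, f i.succ)` resp. `κQ i (...)` depending only on the endpoint values.
Then `D_KL(P | Q) = D_KL(P_𝒯 | Q_𝒯) + Σ_i ∫ D_KL(κP i (a,b) | κQ i (a,b)) dP_{t_{i-1},t_i}(a,b)`. -/
theorem kl_additivity_subintervals (d k : ℕ)
    {S : Fin k → Type*} [∀ i, MeasurableSpace (S i)]
    [∀ i, StandardBorelSpace (S i)] [∀ i, Nonempty (S i)]
    (π : (∀ i, S i) → (Fin (k + 1) → Fin d → ℝ)) (hπ : Measurable π)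
    (P Q : Measure (∀ i, S i)) [IsProbabilityMeasure P] [IsProbabilityMeasure Q]
    (PJ QJ : Measure ((Fin (k + 1) → Fin d → ℝ) × (∀ i, S i)))
    [IsProbabilityMeasure PJ] [IsProbabilityMeasure QJ]
    (hPJ : PJ = P.map (fun ω => (π ω, ω))) (hQJ : QJ = Q.map (fun ω => (π ω, ω)))
    (κP κQ : ∀ i : Fin k, ProbabilityTheory.Kernel ((Fin d → ℝ) × (Fin d → ℝ)) (S i))
    [∀ i, ProbabilityTheory.IsMarkovKernel (κP i)] [∀ i, ProbabilityTheory.IsMarkovKernel (κQ i)]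
    (hPrec : ∀ᵐ f ∂(P.map π),
      PJ.condKernel f = Measure.pi (fun i => κP i (f i.castSucc, f i.succ)))
    (hQrec : ∀ᵐ f ∂(Q.map π),
      QJ.condKernel f = Measure.pi (fun i => κQ i (f i.castSucc, f i.succ))) :
    klDiv P Q
      = klDiv (P.map π) (Q.map π)
        + ∑ i : Fin k, ∫⁻ ab, klDiv (κP i ab) (κQ i ab)
            ∂(P.map (fun ω => ((π ω) i.castSucc, (π ω) i.succ))) := by
  classical
  haveI : IsProbabilityMeasure (P.map π) := Measure.isProbabilityMeasure_map hπ.aemeasurable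
  haveI : IsProbabilityMeasure (Q.map π) := Measure.isProbabilityMeasure_map hπ.aemeasurable
  by_cases hACπ : P.map π ≪ Q.map π
  case neg =>
    have hPQ : ¬ P ≪ Q := fun h => hACπ (h.map hπ)
    rw [klAux_klDiv_of_not_ac hPQ, klAux_klDiv_of_not_ac hACπ, top_add]
  case pos =>
    have hemb : MeasurableEmbedding (fun ω : ∀ i, S i => (π ω, ω)) :=
      (hπ.prodMk measurable_id).measurableEmbedding (fun a b h => congrArg Prod.snd h)
    have h1 : klDiv P Q = klDiv PJ QJ := by
      rw [hPJ, hQJ, klAux_klDiv_map hemb]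
    have hPfst : PJ.fst = P.map π := by
      rw [hPJ]; exact Measure.fst_map_prodMk measurable_id
    have hQfst : QJ.fst = Q.map π := by
      rw [hQJ]; exact Measure.fst_map_prodMk measurable_id
    have hPd : (P.map π) ⊗ₘ PJ.condKernel = PJ := by
      rw [← hPfst]; exact PJ.disintegrate PJ.condKernel
    have hQd : (Q.map π) ⊗ₘ QJ.condKernel = QJ := by
      rw [← hQfst]; exact QJ.disintegrate QJ.condKernel
    have h2 : klDiv PJ QJ = klDiv (P.map π) (Q.map π)
        + ∫⁻ f, klDiv (PJ.condKernel f) (QJ.condKernel f) ∂(P.map π) := by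
      conv_lhs => rw [← hPd, ← hQd]
      exact klAux_klDiv_compProd (P.map π) (Q.map π) PJ.condKernel QJ.condKernel
    have hQrec' : ∀ᵐ f ∂(P.map π),
        QJ.condKernel f = Measure.pi (fun i => κQ i (f i.castSucc, f i.succ)) :=
      hACπ.ae_le hQrec
    have h3 : ∫⁻ f, klDiv (PJ.condKernel f) (QJ.condKernel f) ∂(P.map π)
        = ∫⁻ f, ∑ i : Fin k, klDiv (κP i (f i.castSucc, f i.succ))
            (κQ i (f i.castSucc, f i.succ)) ∂(P.map π) := by
      refine lintegral_congr_ae ?_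
      filter_upwards [hPrec, hQrec'] with f hfP hfQ
      rw [hfP, hfQ, klAux_klDiv_pi]
    have hmeas_i : ∀ i : Fin k,
        Measurable (fun ab : (Fin d → ℝ) × (Fin d → ℝ) => klDiv (κP i ab) (κQ i ab)) :=
      fun i => klAux_measurable_klDiv (κP i) (κQ i)
    have hpair : ∀ i : Fin k,
        Measurable (fun f : Fin (k+1) → Fin d → ℝ => (f i.castSucc, f i.succ)) :=
      fun i => (measurable_pi_apply _).prodMk (measurable_pi_apply _)
    have h4 : ∫⁻ f, ∑ i : Fin k, klDiv (κP i (f i.castSucc, f i.succ))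
          (κQ i (f i.castSucc, f i.succ)) ∂(P.map π)
        = ∑ i : Fin k, ∫⁻ f, klDiv (κP i (f i.castSucc, f i.succ))
            (κQ i (f i.castSucc, f i.succ)) ∂(P.map π) :=
      lintegral_finset_sum _ (fun i _ => (hmeas_i i).comp (hpair i))
    have h5 : ∀ i : Fin k, ∫⁻ f, klDiv (κP i (f i.castSucc, f i.succ))
          (κQ i (f i.castSucc, f i.succ)) ∂(P.map π)
        = ∫⁻ ab, klDiv (κP i ab) (κQ i ab)
            ∂(P.map (fun ω => ((π ω) i.castSucc, (π ω) i.succ))) := by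
      intro i
      have hmm : P.map (fun ω => ((π ω) i.castSucc, (π ω) i.succ))
          = (P.map π).map (fun f : Fin (k+1) → Fin d → ℝ => (f i.castSucc, f i.succ)) :=
        (Measure.map_map (hpair i) hπ).symm
      rw [hmm, lintegral_map (hmeas_i i) (hpair i)]
    rw [h1, h2, h3, h4]
    congr 1
    exact Finset.sum_congr rfl fun i _ => h5 i
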